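/- Let n ≥ 1, let ψ be a unit vector in ℂⁿ, let U be an n×n unitary matrix over ℂ, let V₁, V₂ be arbitrary n×n complex matrices, and let p ∈ [0,1]. Define ε₁ = V₁ψ − Uψ, ε₂ = V₂ψ − Uψ, and εₘ = p·ε₁ + (1−p)·ε₂, and suppose ‖ε₁‖ ≤ a₁, ‖ε₂‖ ≤ a₂, and ‖εₘ‖ ≤ b (Euclidean norms). Then |p·‖V₁ψ‖² + (1−p)·‖V₂ψ‖² − 1| ≤ 2b + p·a₁² + (1−p)·a₂². -/

import Mathlib

/-- The Euclidean norm of a vector in `ℂⁿ`. -/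
noncomputable def eucNorm {n : ℕ} (v : Fin n → ℂ) : ℝ :=
  Real.sqrt (∑ i, ‖v i‖ ^ 2)

/-- View a plain vector as an element of Euclidean space. -/
noncomputable def toEuc {n : ℕ} (v : Fin n → ℂ) : EuclideanSpace ℂ (Fin n) :=
  (WithLp.equiv 2 (Fin n → ℂ)).symm v

lemma eucNorm_eq {n : ℕ} (v : Fin n → ℂ) : eucNorm v = ‖toEuc v‖ := by
  rw [toEuc, EuclideanSpace.norm_eq]; rfl

lemma toEuc_add {n : ℕ} (x y : Fin n → ℂ) : toEuc (x + y) = toEuc x + toEuc y := rfl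

lemma toEuc_smul {n : ℕ} (r : ℝ) (x : Fin n → ℂ) : toEuc (r • x) = r • toEuc x := rfl

open scoped InnerProductSpace

lemma toEuc_inner {n : ℕ} (x y : Fin n → ℂ) :
    ⟪toEuc x, toEuc y⟫_ℂ = dotProduct (star x) y := by
  rw [dotProduct_comm]; exact EuclideanSpace.inner_toLp_toLp x y

lemma eucNorm_mulVec_unitary {n : ℕ} (ψ : Fin n → ℂ)
    (U : Matrix (Fin n) (Fin n) ℂ) (hU : U ∈ Matrix.unitaryGroup (Fin n) ℂ) :
    eucNorm (U.mulVec ψ) = eucNorm ψ := by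
  have hU1 : U.conjTranspose * U = 1 := hU.1
  have key : dotProduct (star (U.mulVec ψ)) (U.mulVec ψ)
      = dotProduct (star ψ) ψ := by
    rw [Matrix.star_mulVec, Matrix.dotProduct_mulVec, Matrix.vecMul_vecMul, hU1,
      Matrix.vecMul_one]
  have hsq : (eucNorm (U.mulVec ψ)) ^ 2 = (eucNorm ψ) ^ 2 := by
    rw [eucNorm_eq, eucNorm_eq, ← inner_self_eq_norm_sq (𝕜 := ℂ),
      ← inner_self_eq_norm_sq (𝕜 := ℂ), toEuc_inner, toEuc_inner, key]
  have hn1 : 0 ≤ eucNorm (U.mulVec ψ) := Real.sqrt_nonneg _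
  have hn2 : 0 ≤ eucNorm ψ := Real.sqrt_nonneg _
  nlinarith [hsq, hn1, hn2]

/-- Trace estimate from the proof of the mixing lemma: the trace of the
unnormalized mixed-channel output deviates from `1` by at most
`2b + p a₁² + (1−p) a₂²`. -/
theorem mixing_channel_trace_bound {n : ℕ} (hn : 1 ≤ n)
    (ψ : Fin n → ℂ) (hψ : eucNorm ψ = 1)
    (U : Matrix (Fin n) (Fin n) ℂ) (hU : U ∈ Matrix.unitaryGroup (Fin n) ℂ)
    (V₁ V₂ : Matrix (Fin n) (Fin n) ℂ)
    (p a₁ a₂ b : ℝ) (hp0 : 0 ≤ p) (hp1 : p ≤ 1)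
    (ε₁ ε₂ εm : Fin n → ℂ)
    (hε₁ : ε₁ = V₁.mulVec ψ - U.mulVec ψ)
    (hε₂ : ε₂ = V₂.mulVec ψ - U.mulVec ψ)
    (hεm : εm = p • ε₁ + (1 - p) • ε₂)
    (ha₁ : eucNorm ε₁ ≤ a₁) (ha₂ : eucNorm ε₂ ≤ a₂) (hb : eucNorm εm ≤ b) :
    |p * (eucNorm (V₁.mulVec ψ)) ^ 2 + (1 - p) * (eucNorm (V₂.mulVec ψ)) ^ 2 - 1|
      ≤ 2 * b + p * a₁ ^ 2 + (1 - p) * a₂ ^ 2 := by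
  set u := toEuc (U.mulVec ψ) with hu'
  set e₁ := toEuc ε₁ with he₁'
  set e₂ := toEuc ε₂ with he₂'
  set em := toEuc εm with hem'
  have hu : ‖u‖ = 1 := by
    rw [hu', ← eucNorm_eq, eucNorm_mulVec_unitary ψ U hU, hψ]
  have he₁ : toEuc (V₁.mulVec ψ) = u + e₁ := by
    rw [he₁', hu', ← toEuc_add, hε₁]; exact congrArg toEuc (by abel)
  have he₂ : toEuc (V₂.mulVec ψ) = u + e₂ := by
    rw [he₂', hu', ← toEuc_add, hε₂]; exact congrArg toEuc (by abel)
  have hem : em = p • e₁ + (1 - p) • e₂ := by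
    rw [hem', he₁', he₂', ← toEuc_smul, ← toEuc_smul, ← toEuc_add, hεm]
  have sq1 : (eucNorm (V₁.mulVec ψ)) ^ 2
      = 1 + 2 * RCLike.re (⟪u, e₁⟫_ℂ) + ‖e₁‖ ^ 2 := by
    rw [eucNorm_eq, he₁, norm_add_sq (𝕜 := ℂ), hu]; ring
  have sq2 : (eucNorm (V₂.mulVec ψ)) ^ 2
      = 1 + 2 * RCLike.re (⟪u, e₂⟫_ℂ) + ‖e₂‖ ^ 2 := by
    rw [eucNorm_eq, he₂, norm_add_sq (𝕜 := ℂ), hu]; ring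
  have hinner : p * RCLike.re (⟪u, e₁⟫_ℂ) + (1 - p) * RCLike.re (⟪u, e₂⟫_ℂ)
      = RCLike.re (⟪u, em⟫_ℂ) := by
    rw [hem, inner_add_right,
      RCLike.real_smul_eq_coe_smul (K := ℂ) p e₁,
      RCLike.real_smul_eq_coe_smul (K := ℂ) (1 - p) e₂,
      inner_smul_real_right, inner_smul_real_right, map_add,
      RCLike.smul_re, RCLike.smul_re]
  have hbnd : |RCLike.re (⟪u, em⟫_ℂ)| ≤ b := by
    calc |RCLike.re (⟪u, em⟫_ℂ)| ≤ ‖⟪u, em⟫_ℂ‖ := RCLike.abs_re_le_norm _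
      _ ≤ ‖u‖ * ‖em‖ := norm_inner_le_norm _ _
      _ = ‖em‖ := by rw [hu, one_mul]
      _ ≤ b := by rw [hem', ← eucNorm_eq]; exact hb
  have hn1 : ‖e₁‖ ^ 2 ≤ a₁ ^ 2 := by
    rw [he₁', ← eucNorm_eq]
    exact pow_le_pow_left₀ (Real.sqrt_nonneg _) ha₁ 2
  have hn2 : ‖e₂‖ ^ 2 ≤ a₂ ^ 2 := by
    rw [he₂', ← eucNorm_eq]
    exact pow_le_pow_left₀ (Real.sqrt_nonneg _) ha₂ 2
  have key : p * (eucNorm (V₁.mulVec ψ)) ^ 2 + (1 - p) * (eucNorm (V₂.mulVec ψ)) ^ 2 - 1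
      = 2 * RCLike.re (⟪u, em⟫_ℂ) + (p * ‖e₁‖ ^ 2 + (1 - p) * ‖e₂‖ ^ 2) := by
    rw [sq1, sq2, ← hinner]; ring
  rw [key]
  have h1p : 0 ≤ 1 - p := by linarith
  calc |2 * RCLike.re (⟪u, em⟫_ℂ) + (p * ‖e₁‖ ^ 2 + (1 - p) * ‖e₂‖ ^ 2)|
      ≤ |2 * RCLike.re (⟪u, em⟫_ℂ)| + |p * ‖e₁‖ ^ 2 + (1 - p) * ‖e₂‖ ^ 2| :=
        abs_add_le _ _
    _ ≤ 2 * b + (p * a₁ ^ 2 + (1 - p) * a₂ ^ 2) := by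
        have habs : |p * ‖e₁‖ ^ 2 + (1 - p) * ‖e₂‖ ^ 2| = p * ‖e₁‖ ^ 2 + (1 - p) * ‖e₂‖ ^ 2 :=
          abs_of_nonneg (by positivity)
        rw [habs, abs_mul, abs_two]
        have h1 := mul_le_mul_of_nonneg_left hn1 hp0
        have h2 := mul_le_mul_of_nonneg_left hn2 h1p
        have h3 := mul_le_mul_of_nonneg_left hbnd (by norm_num : (0:ℝ) ≤ 2)
        linarith
    _ = 2 * b + p * a₁ ^ 2 + (1 - p) * a₂ ^ 2 := by ring
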